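/- Let m ∈ ℕ with m large enough that α₀/m, α₁/m, γ/m ∈ (0,1). Let λ̄(a₀,a₁,g,p) := (1/2)(a₀+a₁+g - √((a₀+a₁+g)² - 4(a₀a₁ + g(a₀ + p(a₁-a₀))))). Then lim_{m→∞} m · λ̄(α₀/m, α₁/m, γ/m, p) = (1/2)(α₀ + α₁ + γ - √((α₁ - α₀ - γ)² + 4γ(1-p)(α₁ - α₀))). -/

import Mathlib

theorem stmt_11 (α₀ α₁ γ p : ℝ)
    (h0 : 0 ≤ α₀) (h01 : α₀ ≤ α₁) (hγ : 0 < γ) (hp : p ∈ Set.Icc (0:ℝ) 1) :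
    Filter.Tendsto
      (fun m : ℕ =>
        (m : ℝ) * ((1 / 2) * (α₀ / m + α₁ / m + γ / m
          - Real.sqrt ((α₀ / m + α₁ / m + γ / m) ^ 2
            - 4 * ((α₀ / m) * (α₁ / m)
              + (γ / m) * (α₀ / m + p * (α₁ / m - α₀ / m)))))))
      Filter.atTop
      (nhds ((1 / 2) * (α₀ + α₁ + γ
        - Real.sqrt ((α₁ - α₀ - γ) ^ 2 + 4 * γ * (1 - p) * (α₁ - α₀))))) := by
  set D : ℝ := (α₁ - α₀ - γ) ^ 2 + 4 * γ * (1 - p) * (α₁ - α₀) with hDdef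
  have hD : 0 ≤ D := by
    have : 0 ≤ 4 * γ * (1 - p) * (α₁ - α₀) := by
      have h1p : 0 ≤ 1 - p := by linarith [hp.2]
      have : 0 ≤ α₁ - α₀ := by linarith
      positivity
    nlinarith [sq_nonneg (α₁ - α₀ - γ)]
  apply Filter.Tendsto.congr' _ tendsto_const_nhds
  filter_upwards [Filter.eventually_ge_atTop 1] with m hm
  have hm0 : (0:ℝ) < (m:ℝ) := by exact_mod_cast Nat.lt_of_lt_of_le Nat.zero_lt_one hm
  have hinner : (α₀ / m + α₁ / m + γ / m) ^ 2
      - 4 * ((α₀ / m) * (α₁ / m)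
        + (γ / m) * (α₀ / m + p * (α₁ / m - α₀ / m))) = D / (m:ℝ) ^ 2 := by
    field_simp
    ring
  rw [hinner]
  have hsqrt : Real.sqrt (D / (m:ℝ) ^ 2) = Real.sqrt D / m := by
    rw [Real.sqrt_div hD, Real.sqrt_sq hm0.le]
  rw [hsqrt]
  field_simp
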